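/- Any stationary point P_{T|X} of the Lagrangian L(P_{T|X}, {λ_x}) = F(P_{T|X}, Q_A, Q_{T,Y}) + Σ_x λ_x ( Σ_t P_{T|X}(t|x) − 1 ) (for fixed Q_A, Q_{T,Y} with strictly positive entries) satisfies P_{T|X}(t|x) = 2^{μ_x} α_{t,x} / Π_y [ Σ_{x̃} P_X(x̃) P_{A|X}(a(t)|x̃) P_{Y|X,A}(y|x̃,a(t)) ]^{P_{Y|X,A}(y|x,a(t))}, where μ_x is an affine function of λ_x and P_{A|X}(a|x) = Σ_{t : a(t)=a} P_{T|X}(t|x); consequently P_{T|X}(t|x) = (α_{t,x} / α_{a(t),x}) P_{A|X}(a(t)|x), so the stationary point is completely determined by the |𝒜||𝒳| values P_{A|X}(a|x), which satisfy the nonlinear system P_{A|X}(a|x) = 2^{μ_x} α_{a,x} / Π_y [ Σ_{x̃} P_X(x̃) P_{Y|X,A}(y|x̃,a) P_{A|X}(a|x̃) ]^{P_{Y|X,A}(y|x,a)}. -/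

import Mathlib

open Finset

noncomputable section

/-- A probability mass function on a finite alphabet. -/
def IsPMF {α : Type} [Fintype α] (p : α → ℝ) : Prop :=
  (∀ a, 0 ≤ p a) ∧ ∑ a, p a = 1

/-- A conditional probability mass function. -/
def IsCondPMF {α β : Type} [Fintype α] [Fintype β] (p : α → β → ℝ) : Prop :=
  ∀ a, IsPMF (p a)

/-- A Shannon strategy: an estimate function `Y → Xh` together with an action in `A`. -/
abbrev Strat (Y Xh A : Type) : Type := (Y → Xh) × A

variable {X Y A Xh : Type} [Fintype X] [Fintype Y] [Fintype A] [Fintype Xh]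
  [DecidableEq X] [DecidableEq Y] [DecidableEq A] [DecidableEq Xh]


/-- Joint pmf `P_{X,Y,T}(x,y,t) = P_X(x) P_{T|X}(t|x) P_{Y|X,A}(y|x,a(t))`. -/
def pXYT (PX : X → ℝ) (PW : A → X → Y → ℝ) (PT : X → Strat Y Xh A → ℝ)
    (x : X) (y : Y) (t : Strat Y Xh A) : ℝ :=
  PX x * PT x t * PW t.2 x y

/-- Action marginal `P_A`. -/
def pA (PX : X → ℝ) (PT : X → Strat Y Xh A → ℝ) (a : A) : ℝ :=
  ∑ x, ∑ t, if t.2 = a then PX x * PT x t else 0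

/-- Marginal `P_{X,A}`. -/
def pXA (PX : X → ℝ) (PT : X → Strat Y Xh A → ℝ) (x : X) (a : A) : ℝ :=
  ∑ t, if t.2 = a then PX x * PT x t else 0

/-- Marginal `P_{Y,A}`. -/
def pYA (PX : X → ℝ) (PW : A → X → Y → ℝ) (PT : X → Strat Y Xh A → ℝ)
    (y : Y) (a : A) : ℝ :=
  ∑ x, ∑ t, if t.2 = a then pXYT PX PW PT x y t else 0

/-- Marginal `P_{X,Y,A}`. -/
def pXYA (PX : X → ℝ) (PW : A → X → Y → ℝ) (PT : X → Strat Y Xh A → ℝ)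
    (x : X) (y : Y) (a : A) : ℝ :=
  ∑ t, if t.2 = a then pXYT PX PW PT x y t else 0

/-- Marginal `P_{Y,T}`. -/
def pYT (PX : X → ℝ) (PW : A → X → Y → ℝ) (PT : X → Strat Y Xh A → ℝ)
    (y : Y) (t : Strat Y Xh A) : ℝ :=
  ∑ x, pXYT PX PW PT x y t

/-- Mutual information `I(X; a(T))` (base-2 logarithms). -/
def IXA (PX : X → ℝ) (PT : X → Strat Y Xh A → ℝ) : ℝ :=
  ∑ x, ∑ a, pXA PX PT x a * Real.logb 2 (pXA PX PT x a / (PX x * pA PX PT a))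

/-- Conditional mutual information `I(X; T | Y, a(T))` (base-2 logarithms). -/
def IXTcondYA (PX : X → ℝ) (PW : A → X → Y → ℝ) (PT : X → Strat Y Xh A → ℝ) : ℝ :=
  ∑ x, ∑ y, ∑ t, pXYT PX PW PT x y t *
    Real.logb 2 (pXYT PX PW PT x y t * pYA PX PW PT y t.2 /
      (pXYA PX PW PT x y t.2 * pYT PX PW PT y t))

/-- Average distortion `E[d(X, T(Y))]`. -/
def expDist (PX : X → ℝ) (PW : A → X → Y → ℝ) (dist : X → Xh → ℝ)
    (PT : X → Strat Y Xh A → ℝ) : ℝ :=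
  ∑ x, ∑ y, ∑ t, pXYT PX PW PT x y t * dist x (t.1 y)

/-- Average action cost `E[Δ(a(T))]`. -/
def expCost (PX : X → ℝ) (cost : A → ℝ) (PT : X → Strat Y Xh A → ℝ) : ℝ :=
  ∑ x, ∑ t, PX x * PT x t * cost t.2

/-- The rate-distortion-cost function in the Shannon-strategy formulation. -/
def RDC (PX : X → ℝ) (PW : A → X → Y → ℝ) (dist : X → Xh → ℝ) (cost : A → ℝ)
    (D C : ℝ) : ℝ :=
  sInf { r : ℝ | ∃ PT : X → Strat Y Xh A → ℝ, IsCondPMF PT ∧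
    expDist PX PW dist PT ≤ D ∧ expCost PX cost PT ≤ C ∧
    r = IXA PX PT + IXTcondYA PX PW PT }
/-- Conditional joint pmf `P_{Y,T|X}(y,t|x) = P_{T|X}(t|x) P_{Y|X,A}(y|x,a(t))`. -/
def pYTgivenX (PW : A → X → Y → ℝ) (PT : X → Strat Y Xh A → ℝ)
    (x : X) (y : Y) (t : Strat Y Xh A) : ℝ :=
  PT x t * PW t.2 x y

/-- The (real-valued) Blahut–Arimoto functional `F(P_{T|X}, Q_{T,Y}, Q_A)`
(base-2 logarithms). -/
def FfunR (PX : X → ℝ) (PW : A → X → Y → ℝ) (dist : X → Xh → ℝ) (cost : A → ℝ)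
    (s m : ℝ) (PT : X → Strat Y Xh A → ℝ) (QTY : Strat Y Xh A × Y → ℝ)
    (QA : A → ℝ) : ℝ :=
  (∑ y, ∑ a, pYA PX PW PT y a * Real.logb 2 (pYA PX PW PT y a / QA a))
  - (∑ x, ∑ y, ∑ t, pXYT PX PW PT x y t * Real.logb 2 (PW t.2 x y))
  + (∑ x, PX x * ∑ t, ∑ y, pYTgivenX PW PT x y t *
      Real.logb 2 (pYTgivenX PW PT x y t / QTY (t, y)))
  - s * expDist PX PW dist PT - m * expCost PX cost PT

/-- The Lagrangian `L(P_{T|X}, {λ_x}) = F + Σ_x λ_x (Σ_t P_{T|X}(t|x) − 1)`. -/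
def Lagr (PX : X → ℝ) (PW : A → X → Y → ℝ) (dist : X → Xh → ℝ) (cost : A → ℝ)
    (s m : ℝ) (QTY : Strat Y Xh A × Y → ℝ) (QA : A → ℝ) (lam : X → ℝ)
    (PT : X → Strat Y Xh A → ℝ) : ℝ :=
  FfunR PX PW dist cost s m PT QTY QA + ∑ x, lam x * ((∑ t, PT x t) - 1)

/-- The constant `α_{t,x} = Q_A(a(t)) 2^{m Δ(a(t))} 2^{Σ_y P(y|x,a(t)) [s d(t(y),x) + log₂ Q_{T,Y}(t,y)]}`. -/
def alphaT (PW : A → X → Y → ℝ) (dist : X → Xh → ℝ) (cost : A → ℝ) (s m : ℝ)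
    (QTY : Strat Y Xh A × Y → ℝ) (QA : A → ℝ) (t : Strat Y Xh A) (x : X) : ℝ :=
  QA t.2 * (2 : ℝ) ^ (m * cost t.2) *
    (2 : ℝ) ^ (∑ y, PW t.2 x y * (s * dist x (t.1 y) + Real.logb 2 (QTY (t, y))))

/-- The constant `α_{a,x} = Σ_{t : a(t)=a} α_{t,x}`. -/
def alphaA (PW : A → X → Y → ℝ) (dist : X → Xh → ℝ) (cost : A → ℝ) (s m : ℝ)
    (QTY : Strat Y Xh A × Y → ℝ) (QA : A → ℝ) (a : A) (x : X) : ℝ :=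
  ∑ t, if t.2 = a then alphaT PW dist cost s m QTY QA t x else 0

/-- The induced conditional action pmf `P_{A|X}(a|x) = Σ_{t : a(t)=a} P_{T|X}(t|x)`. -/
def pAgivenX (PT : X → Strat Y Xh A → ℝ) (a : A) (x : X) : ℝ :=
  ∑ t, if t.2 = a then PT x t else 0



/-- derivative of `u ↦ (c+ku) * logb 2 ((c+ku)/q)`. -/
lemma statAuxDeriv (c k q u0 : ℝ) (hq : 0 < q) (h : 0 < c + k * u0 ∨ k = 0) :
    HasDerivAt (fun u => (c + k * u) * Real.logb 2 ((c + k * u) / q))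
      (k * (Real.logb 2 ((c + k * u0) / q) + 1 / Real.log 2)) u0 := by
  rcases h with h | rfl
  · have lin : HasDerivAt (fun u : ℝ => c + k * u) k u0 := by
      simpa using ((hasDerivAt_id u0).const_mul k).const_add c
    have base : HasDerivAt (fun z : ℝ => z * Real.log z)
        (Real.log (c + k * u0) + 1) (c + k * u0) := Real.hasDerivAt_mul_log h.ne'
    have comp1 : HasDerivAt (fun u => (c + k * u) * Real.log (c + k * u))
        ((Real.log (c + k * u0) + 1) * k) u0 := by
      exact base.comp u0 lin
    have hq' : HasDerivAt (fun u => (c + k * u) * Real.log q) (k * Real.log q) u0 := by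
      simpa using lin.mul_const (Real.log q)
    have hsub := comp1.sub hq'
    have hmem : {u : ℝ | 0 < c + k * u} ∈ nhds u0 := by
      have : IsOpen {u : ℝ | 0 < c + k * u} :=
        isOpen_lt continuous_const (by fun_prop)
      exact this.mem_nhds h
    have heq : (fun u => (c + k * u) * Real.log ((c + k * u) / q)) =ᶠ[nhds u0]
        (fun u => (c + k * u) * Real.log (c + k * u) - (c + k * u) * Real.log q) := by
      filter_upwards [hmem] with u hu
      rw [Real.log_div (ne_of_gt hu) hq.ne']
      ring
    have final := hsub.congr_of_eventuallyEq heq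
    have final2 := final.div_const (Real.log 2)
    have : (fun u => (c + k * u) * Real.log ((c + k * u) / q) / Real.log 2)
        = fun u => (c + k * u) * Real.logb 2 ((c + k * u) / q) := by
      funext u; rw [Real.logb]; ring
    rw [this] at final2
    refine final2.congr_deriv ?_
    rw [Real.logb, Real.log_div h.ne' hq.ne']
    ring
  · simp only [zero_mul, add_zero, zero_add]
    exact hasDerivAt_const u0 _

lemma statMulLogLin (k q u : ℝ) (hq : 0 < q) :
    (k * u) * Real.logb 2 (k * u / q) =
      (k / Real.log 2) * (u * Real.log u)
        + (k * (Real.log k - Real.log q) / Real.log 2) * u := by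
  rcases eq_or_ne k 0 with rfl | hk
  · simp
  rcases eq_or_ne u 0 with rfl | hu
  · simp
  rw [Real.logb, Real.log_div (mul_ne_zero hk hu) hq.ne', Real.log_mul hk hu]
  ring

lemma statNotDiffMulLog : ¬ DifferentiableAt ℝ (fun u : ℝ => u * Real.log u) 0 := by
  intro h
  have h' := h.hasDerivAt
  rw [hasDerivAt_iff_tendsto_slope] at h'
  have h2 : Filter.Tendsto (slope (fun u : ℝ => u * Real.log u) 0)
      (nhdsWithin 0 (Set.Ioi 0)) (nhds (deriv (fun u : ℝ => u * Real.log u) 0)) :=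
    h'.mono_left (nhdsWithin_mono 0 (fun u hu => ne_of_gt hu))
  have h3 : Filter.Tendsto (slope (fun u : ℝ => u * Real.log u) 0)
      (nhdsWithin 0 (Set.Ioi 0)) Filter.atBot := by
    refine Filter.Tendsto.congr' ?_ Real.tendsto_log_nhdsGT_zero
    filter_upwards [self_mem_nhdsWithin] with u hu
    have hu' : u ≠ 0 := ne_of_gt hu
    field_simp [slope, hu']
    simp [slope, smul_eq_mul, inv_mul_cancel_left₀ hu']
  exact not_tendsto_nhds_of_tendsto_atBot h3 _ h2


/-! ### Auxiliary machinery for the stationarity theorem -/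

section StatAux2

set_option linter.unusedSectionVars false

lemma ite_sum' {ι : Type} [Fintype ι] (c : Prop) [Decidable c] (h : ι → ℝ) :
    (∑ y, if c then h y else 0) = if c then ∑ y, h y else 0 := by
  split_ifs <;> simp

lemma sum_split_one {ι : Type} [Fintype ι] [DecidableEq ι] (i0 : ι) (f g : ι → ℝ) :
    (∑ i, if i0 = i then f i else g i) = f i0 - g i0 + ∑ i, g i := by
  have h : ∀ i, (if i0 = i then f i else g i)
      = g i + (if i0 = i then f i - g i else 0) := by
    intro i; split_ifs with h1
    · subst h1; ring
    · ring
  simp_rw [h, Finset.sum_add_distrib, Finset.sum_ite_eq, Finset.mem_univ, if_true]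
  ring

lemma sum2_split {ι1 ι3 : Type} [Fintype ι1] [Fintype ι3]
    [DecidableEq ι1] [DecidableEq ι3] (x : ι1) (t : ι3) (f g : ι1 → ι3 → ℝ) :
    (∑ x', ∑ t', if x' = x ∧ t' = t then f x' t' else g x' t')
      = f x t - g x t + ∑ x', ∑ t', g x' t' := by
  have h : ∀ x' t', (if x' = x ∧ t' = t then f x' t' else g x' t')
      = g x' t' + (if x' = x ∧ t' = t then f x' t' - g x' t' else 0) := by
    intro x' t'; split_ifs with h1
    · obtain ⟨rfl, rfl⟩ := h1; ring
    · ring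
  simp_rw [h, Finset.sum_add_distrib, ite_and, ite_sum',
    Finset.sum_ite_eq' Finset.univ, Finset.mem_univ, if_true]
  ring

lemma sum3_split {ι1 ι2 ι3 : Type} [Fintype ι1] [Fintype ι2] [Fintype ι3]
    [DecidableEq ι1] [DecidableEq ι3] (x : ι1) (t : ι3) (f g : ι1 → ι2 → ι3 → ℝ) :
    (∑ x', ∑ y, ∑ t', if x' = x ∧ t' = t then f x' y t' else g x' y t')
      = (∑ y, (f x y t - g x y t)) + ∑ x', ∑ y, ∑ t', g x' y t' := by
  have h : ∀ x' y t', (if x' = x ∧ t' = t then f x' y t' else g x' y t')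
      = g x' y t' + (if x' = x ∧ t' = t then f x' y t' - g x' y t' else 0) := by
    intro x' y t'; split_ifs with h1
    · obtain ⟨rfl, rfl⟩ := h1; ring
    · ring
  simp_rw [h, Finset.sum_add_distrib, ite_and, ite_sum',
    Finset.sum_ite_eq' Finset.univ, Finset.mem_univ, if_true]
  ring

lemma sum2_split_prop {ι3 ι2 : Type} [Fintype ι3] [Fintype ι2] [DecidableEq ι3]
    (p : Prop) [Decidable p] (t : ι3) (f g : ι3 → ι2 → ℝ) :
    (∑ t', ∑ y, if p ∧ t' = t then f t' y else g t' y)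
      = (if p then ∑ y, (f t y - g t y) else 0) + ∑ t', ∑ y, g t' y := by
  have h : ∀ t' y, (if p ∧ t' = t then f t' y else g t' y)
      = g t' y + (if t' = t then (if p then f t' y - g t' y else 0) else 0) := by
    intro t' y
    by_cases h1 : t' = t
    · subst h1
      by_cases hp : p
      · simp only [hp, true_and, if_pos rfl, if_true]; ring
      · simp [hp]
    · simp [h1]
  simp_rw [h, Finset.sum_add_distrib, ite_sum', Finset.sum_ite_eq' Finset.univ,
    Finset.mem_univ, if_true]
  ring

lemma sum1_split_prop {ι3 : Type} [Fintype ι3] [DecidableEq ι3]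
    (p : Prop) [Decidable p] (t : ι3) (f g : ι3 → ℝ) :
    (∑ t', if p ∧ t' = t then f t' else g t')
      = (if p then f t - g t else 0) + ∑ t', g t' := by
  have h : ∀ t', (if p ∧ t' = t then f t' else g t')
      = g t' + (if t' = t then (if p then f t' - g t' else 0) else 0) := by
    intro t'
    by_cases h1 : t' = t
    · subst h1
      by_cases hp : p
      · simp only [hp, true_and, if_pos rfl, if_true]; ring
      · simp [hp]
    · simp [h1]
  simp_rw [h, Finset.sum_add_distrib, Finset.sum_ite_eq' Finset.univ,
    Finset.mem_univ, if_true]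
  ring

end StatAux2

section ReprLemmas

set_option linter.unusedSectionVars false

lemma pXYT_Pu (PX : X → ℝ) (PW : A → X → Y → ℝ) (PT : X → Strat Y Xh A → ℝ)
    (x : X) (t : Strat Y Xh A) (u : ℝ) (x' : X) (y : Y) (t' : Strat Y Xh A) :
    pXYT PX PW (fun x'' t'' => if x'' = x ∧ t'' = t then u else PT x'' t'') x' y t'
      = if x' = x ∧ t' = t then PX x * u * PW t.2 x y else pXYT PX PW PT x' y t' := by
  unfold pXYT
  by_cases h : x' = x ∧ t' = t
  · obtain ⟨rfl, rfl⟩ := h; simp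
  · simp [h]

lemma pYTgivenX_Pu (PW : A → X → Y → ℝ) (PT : X → Strat Y Xh A → ℝ)
    (x : X) (t : Strat Y Xh A) (u : ℝ) (x' : X) (y : Y) (t' : Strat Y Xh A) :
    pYTgivenX PW (fun x'' t'' => if x'' = x ∧ t'' = t then u else PT x'' t'') x' y t'
      = if x' = x ∧ t' = t then PW t.2 x y * u else pYTgivenX PW PT x' y t' := by
  unfold pYTgivenX
  by_cases h : x' = x ∧ t' = t
  · obtain ⟨rfl, rfl⟩ := h; simp [mul_comm]
  · simp [h]

lemma pYA_Pu (PX : X → ℝ) (PW : A → X → Y → ℝ) (PT : X → Strat Y Xh A → ℝ)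
    (x : X) (t : Strat Y Xh A) (u : ℝ) (y : Y) (a' : A) :
    pYA PX PW (fun x' t' => if x' = x ∧ t' = t then u else PT x' t') y a'
      = if t.2 = a'
        then pYA PX PW PT y t.2 - PX x * PW t.2 x y * PT x t + PX x * PW t.2 x y * u
        else pYA PX PW PT y a' := by
  unfold pYA
  simp_rw [pXYT_Pu PX PW PT x t u]
  have h : ∀ (x' : X) (t' : Strat Y Xh A),
      (if t'.2 = a' then (if x' = x ∧ t' = t then PX x * u * PW t.2 x y
          else pXYT PX PW PT x' y t') else 0)
      = (if t'.2 = a' then pXYT PX PW PT x' y t' else 0)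
        + (if x' = x ∧ t' = t
            then (if t.2 = a' then PX x * PW t.2 x y * (u - PT x t) else 0) else 0) := by
    intro x' t'
    by_cases hxt : x' = x ∧ t' = t
    · obtain ⟨rfl, rfl⟩ := hxt
      simp only [if_pos (⟨rfl, rfl⟩ : x' = x' ∧ t' = t'), pXYT]
      split_ifs <;> ring
    · simp [hxt]
  simp_rw [h, Finset.sum_add_distrib, ite_and, ite_sum',
    Finset.sum_ite_eq' Finset.univ, Finset.mem_univ, if_true]
  split_ifs with hc
  · rw [← hc]; ring
  · simp

lemma reprT1 (PX : X → ℝ) (PW : A → X → Y → ℝ) (PT : X → Strat Y Xh A → ℝ)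
    (x : X) (t : Strat Y Xh A) (QA : A → ℝ) : ∃ C : ℝ, ∀ u : ℝ,
    (∑ y, ∑ a', pYA PX PW (fun x' t' => if x' = x ∧ t' = t then u else PT x' t') y a'
        * Real.logb 2 (pYA PX PW (fun x' t' => if x' = x ∧ t' = t then u else PT x' t') y a'
            / QA a'))
    = (∑ y, (pYA PX PW PT y t.2 - PX x * PW t.2 x y * PT x t + PX x * PW t.2 x y * u)
        * Real.logb 2 ((pYA PX PW PT y t.2 - PX x * PW t.2 x y * PT x t
            + PX x * PW t.2 x y * u) / QA t.2)) + C := by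
  refine ⟨∑ y, ((∑ a', pYA PX PW PT y a' * Real.logb 2 (pYA PX PW PT y a' / QA a'))
      - pYA PX PW PT y t.2 * Real.logb 2 (pYA PX PW PT y t.2 / QA t.2)), fun u => ?_⟩
  simp_rw [pYA_Pu PX PW PT x t u]
  have hpt : ∀ (c : Prop) [Decidable c] (P Q q : ℝ),
      (if c then P else Q) * Real.logb 2 ((if c then P else Q) / q)
        = if c then P * Real.logb 2 (P / q) else Q * Real.logb 2 (Q / q) := by
    intro c _ P Q q; split_ifs <;> rfl
  simp_rw [hpt, sum_split_one t.2, Finset.sum_add_distrib, Finset.sum_sub_distrib]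
  ring

lemma reprT2 (PX : X → ℝ) (PW : A → X → Y → ℝ) (PT : X → Strat Y Xh A → ℝ)
    (x : X) (t : Strat Y Xh A) (cfn : X → Y → Strat Y Xh A → ℝ) : ∃ C : ℝ, ∀ u : ℝ,
    (∑ x', ∑ y, ∑ t', pXYT PX PW (fun x'' t'' => if x'' = x ∧ t'' = t then u else PT x'' t'')
        x' y t' * cfn x' y t')
    = u * (∑ y, PX x * PW t.2 x y * cfn x y t) + C := by
  refine ⟨(∑ x', ∑ y, ∑ t', pXYT PX PW PT x' y t' * cfn x' y t')
      - (∑ y, pXYT PX PW PT x y t * cfn x y t), fun u => ?_⟩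
  simp_rw [pXYT_Pu PX PW PT x t u, ite_mul]
  rw [sum3_split]
  rw [Finset.mul_sum, Finset.sum_sub_distrib]
  have : ∀ y, PX x * u * PW t.2 x y * cfn x y t = u * (PX x * PW t.2 x y * cfn x y t) := by
    intro y; ring
  simp_rw [this]
  ring

lemma reprT3 (PX : X → ℝ) (PW : A → X → Y → ℝ) (PT : X → Strat Y Xh A → ℝ)
    (x : X) (t : Strat Y Xh A) (QTY : Strat Y Xh A × Y → ℝ) : ∃ C : ℝ, ∀ u : ℝ,
    (∑ x', PX x' * ∑ t', ∑ y,
      pYTgivenX PW (fun x'' t'' => if x'' = x ∧ t'' = t then u else PT x'' t'') x' y t'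
        * Real.logb 2 (pYTgivenX PW (fun x'' t'' => if x'' = x ∧ t'' = t then u
            else PT x'' t'') x' y t' / QTY (t', y)))
    = PX x * (∑ y, (PW t.2 x y * u) * Real.logb 2 (PW t.2 x y * u / QTY (t, y))) + C := by
  refine ⟨(∑ x', PX x' * ∑ t', ∑ y, pYTgivenX PW PT x' y t'
        * Real.logb 2 (pYTgivenX PW PT x' y t' / QTY (t', y)))
      - PX x * (∑ y, pYTgivenX PW PT x y t
        * Real.logb 2 (pYTgivenX PW PT x y t / QTY (t, y))), fun u => ?_⟩
  simp_rw [pYTgivenX_Pu PW PT x t u]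
  have hpt : ∀ (c : Prop) [Decidable c] (P Q q : ℝ),
      (if c then P else Q) * Real.logb 2 ((if c then P else Q) / q)
        = if c then P * Real.logb 2 (P / q) else Q * Real.logb 2 (Q / q) := by
    intro c _ P Q q; split_ifs <;> rfl
  simp_rw [hpt]
  have hsum : ∀ x' : X,
      (∑ t', ∑ y, if x' = x ∧ t' = t
          then PW t.2 x y * u * Real.logb 2 (PW t.2 x y * u / QTY (t', y))
          else pYTgivenX PW PT x' y t' * Real.logb 2 (pYTgivenX PW PT x' y t' / QTY (t', y)))
        = (if x' = x then ∑ y,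
              (PW t.2 x y * u * Real.logb 2 (PW t.2 x y * u / QTY (t, y))
                - pYTgivenX PW PT x' y t * Real.logb 2 (pYTgivenX PW PT x' y t / QTY (t, y)))
            else 0)
          + ∑ t', ∑ y, pYTgivenX PW PT x' y t'
              * Real.logb 2 (pYTgivenX PW PT x' y t' / QTY (t', y)) :=
    fun x' => sum2_split_prop _ t _ _
  simp_rw [hsum, mul_add, mul_ite, mul_zero, Finset.sum_add_distrib,
    Finset.sum_ite_eq' Finset.univ, Finset.mem_univ, if_true, Finset.sum_sub_distrib,
    mul_sub]
  ring

lemma reprCost (PX : X → ℝ) (PT : X → Strat Y Xh A → ℝ)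
    (x : X) (t : Strat Y Xh A) (cost : A → ℝ) : ∃ C : ℝ, ∀ u : ℝ,
    (∑ x', ∑ t', PX x' * (if x' = x ∧ t' = t then u else PT x' t') * cost t'.2)
    = u * (PX x * cost t.2) + C := by
  refine ⟨(∑ x', ∑ t', PX x' * PT x' t' * cost t'.2) - PX x * PT x t * cost t.2, fun u => ?_⟩
  have h : ∀ (x' : X) (t' : Strat Y Xh A),
      PX x' * (if x' = x ∧ t' = t then u else PT x' t') * cost t'.2
        = if x' = x ∧ t' = t then PX x' * u * cost t'.2
          else PX x' * PT x' t' * cost t'.2 := by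
    intro _ _; split_ifs <;> ring
  simp_rw [h]
  rw [sum2_split]
  ring

lemma reprLam (PT : X → Strat Y Xh A → ℝ)
    (x : X) (t : Strat Y Xh A) (lam : X → ℝ) : ∃ C : ℝ, ∀ u : ℝ,
    (∑ x', lam x' * ((∑ t', if x' = x ∧ t' = t then u else PT x' t') - 1))
    = lam x * u + C := by
  refine ⟨∑ x', lam x' * ((∑ t', PT x' t') - 1) - lam x * PT x t, fun u => ?_⟩
  have hsum : ∀ x' : X,
      (∑ t', if x' = x ∧ t' = t then u else PT x' t')
        = (if x' = x then u - PT x' t else 0) + ∑ t', PT x' t' :=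
    fun x' => sum1_split_prop _ t _ _
  simp_rw [hsum]
  have h : ∀ x' : X, lam x' * (((if x' = x then u - PT x' t else 0)
        + ∑ t', PT x' t') - 1)
      = (if x' = x then lam x' * (u - PT x t) else 0)
        + lam x' * ((∑ t', PT x' t') - 1) := by
    intro x'
    split_ifs with h1
    · subst h1; ring
    · ring
  simp_rw [h, Finset.sum_add_distrib, Finset.sum_ite_eq' Finset.univ, Finset.mem_univ, if_true]
  ring

lemma masterRepr (PX : X → ℝ) (PW : A → X → Y → ℝ) (PT : X → Strat Y Xh A → ℝ)
    (x : X) (t : Strat Y Xh A) (dist : X → Xh → ℝ) (cost : A → ℝ) (s m : ℝ)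
    (QTY : Strat Y Xh A × Y → ℝ) (QA : A → ℝ) (lam : X → ℝ) : ∃ K : ℝ, ∀ u : ℝ,
    Lagr PX PW dist cost s m QTY QA lam
        (fun x' t' => if x' = x ∧ t' = t then u else PT x' t')
      = K + (∑ y, (pYA PX PW PT y t.2 - PX x * PW t.2 x y * PT x t + PX x * PW t.2 x y * u)
              * Real.logb 2 ((pYA PX PW PT y t.2 - PX x * PW t.2 x y * PT x t
                  + PX x * PW t.2 x y * u) / QA t.2))
        - u * (∑ y, PX x * PW t.2 x y * Real.logb 2 (PW t.2 x y))
        + PX x * (∑ y, (PW t.2 x y * u) * Real.logb 2 (PW t.2 x y * u / QTY (t, y)))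
        - s * (u * (∑ y, PX x * PW t.2 x y * dist x (t.1 y)))
        - m * (u * (PX x * cost t.2))
        + lam x * u := by
  obtain ⟨C1, h1⟩ := reprT1 PX PW PT x t QA
  obtain ⟨C2, h2⟩ := reprT2 PX PW PT x t (fun x' y t' => Real.logb 2 (PW t'.2 x' y))
  obtain ⟨C3, h3⟩ := reprT3 PX PW PT x t QTY
  obtain ⟨C4, h4⟩ := reprT2 PX PW PT x t (fun x' y t' => dist x' (t'.1 y))
  obtain ⟨C5, h5⟩ := reprCost PX PT x t cost
  obtain ⟨C6, h6⟩ := reprLam PT x t lam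
  refine ⟨C1 - C2 + C3 - s * C4 - m * C5 + C6, fun u => ?_⟩
  unfold Lagr FfunR expDist expCost
  rw [h1 u, h2 u, h3 u, h4 u, h5 u, h6 u]
  ring

end ReprLemmas

section MoreAux

set_option linter.unusedSectionVars false

lemma pYA_nonneg (PX : X → ℝ) (PW : A → X → Y → ℝ) (PT : X → Strat Y Xh A → ℝ)
    (hPX : ∀ x', 0 ≤ PX x') (hPW : ∀ a x' y, 0 ≤ PW a x' y) (hPT : ∀ x' t', 0 ≤ PT x' t')
    (y : Y) (a : A) : 0 ≤ pYA PX PW PT y a := by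
  unfold pYA pXYT
  refine Finset.sum_nonneg fun x' _ => Finset.sum_nonneg fun t' _ => ?_
  split_ifs
  · exact mul_nonneg (mul_nonneg (hPX _) (hPT _ _)) (hPW _ _ _)
  · exact le_refl 0

lemma pYA_lower (PX : X → ℝ) (PW : A → X → Y → ℝ) (PT : X → Strat Y Xh A → ℝ)
    (hPX : ∀ x', 0 ≤ PX x') (hPW : ∀ a x' y, 0 ≤ PW a x' y) (hPT : ∀ x' t', 0 ≤ PT x' t')
    (x0 : X) (y : Y) (t0 : Strat Y Xh A) :
    pXYT PX PW PT x0 y t0 ≤ pYA PX PW PT y t0.2 := by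
  unfold pYA
  have hnn : ∀ (x' : X) (t' : Strat Y Xh A),
      0 ≤ (if t'.2 = t0.2 then pXYT PX PW PT x' y t' else 0) := by
    intro x' t'
    split_ifs
    · exact mul_nonneg (mul_nonneg (hPX _) (hPT _ _)) (hPW _ _ _)
    · exact le_refl 0
  have h1 : pXYT PX PW PT x0 y t0
      ≤ ∑ t', if t'.2 = t0.2 then pXYT PX PW PT x0 y t' else 0 := by
    have := Finset.single_le_sum (f := fun t' => if t'.2 = t0.2
        then pXYT PX PW PT x0 y t' else 0) (fun t' _ => hnn x0 t') (Finset.mem_univ t0)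
    simpa using this
  refine h1.trans ?_
  exact Finset.single_le_sum (f := fun x' => ∑ t', if t'.2 = t0.2
      then pXYT PX PW PT x' y t' else 0)
    (fun x' _ => Finset.sum_nonneg fun t' _ => hnn x' t') (Finset.mem_univ x0)

lemma pYA_eq (PX : X → ℝ) (PW : A → X → Y → ℝ) (PT : X → Strat Y Xh A → ℝ)
    (y : Y) (a : A) :
    pYA PX PW PT y a = ∑ xt, PX xt * pAgivenX PT a xt * PW a xt y := by
  unfold pYA pAgivenX pXYT
  refine Finset.sum_congr rfl fun x' _ => ?_
  rw [Finset.mul_sum, Finset.sum_mul]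
  refine Finset.sum_congr rfl fun t' _ => ?_
  simp only [mul_ite, mul_zero, ite_mul, zero_mul]
  split_ifs with h
  · rw [h]
  · rfl

lemma rpow_sum_eq_prod (w P : Y → ℝ) (hP : ∀ y, w y ≠ 0 → 0 < P y) :
    (2 : ℝ) ^ (∑ y, w y * Real.logb 2 (P y)) = ∏ y, (P y) ^ (w y) := by
  rw [Real.rpow_def_of_pos (by norm_num : (0:ℝ) < 2), Finset.mul_sum, Real.exp_sum]
  refine Finset.prod_congr rfl fun y _ => ?_
  rcases eq_or_ne (w y) 0 with h0 | h0
  · simp [h0]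
  · have hPy := hP y h0
    rw [Real.rpow_def_of_pos hPy, Real.logb]
    congr 1
    have hL2 : Real.log 2 ≠ 0 := (Real.log_pos one_lt_two).ne'
    field_simp

lemma alphaT_pos (PW : A → X → Y → ℝ) (dist : X → Xh → ℝ) (cost : A → ℝ) (s m : ℝ)
    (QTY : Strat Y Xh A × Y → ℝ) (QA : A → ℝ) (hQA : ∀ a, 0 < QA a)
    (t : Strat Y Xh A) (x : X) :
    0 < alphaT PW dist cost s m QTY QA t x := by
  unfold alphaT
  have h1 := hQA t.2
  have h2 : (0:ℝ) < (2:ℝ) ^ (m * cost t.2) := Real.rpow_pos_of_pos (by norm_num) _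
  have h3 : (0:ℝ) < (2:ℝ) ^ (∑ y, PW t.2 x y * (s * dist x (t.1 y)
      + Real.logb 2 (QTY (t, y)))) := Real.rpow_pos_of_pos (by norm_num) _
  positivity

lemma alphaA_pos (PW : A → X → Y → ℝ) (dist : X → Xh → ℝ) (cost : A → ℝ) (s m : ℝ)
    (QTY : Strat Y Xh A × Y → ℝ) (QA : A → ℝ) (hQA : ∀ a, 0 < QA a)
    (t : Strat Y Xh A) (x : X) :
    0 < alphaA PW dist cost s m QTY QA t.2 x := by
  unfold alphaA
  refine Finset.sum_pos' (fun t' _ => ?_) ⟨t, Finset.mem_univ t, ?_⟩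
  · split_ifs
    · exact (alphaT_pos PW dist cost s m QTY QA hQA t' x).le
    · exact le_refl 0
  · rw [if_pos rfl]
    exact alphaT_pos PW dist cost s m QTY QA hQA t x

lemma myDivHelper (a b c d : ℝ) (hb : b ≠ 0) : (a / b) * (c * b / d) = c * a / d := by
  rcases eq_or_ne d 0 with rfl | hd
  · simp
  · field_simp

lemma bad_case {Y : Type} [Fintype Y] (c k q2 w r : Y → ℝ) (e d K : ℝ)
    (hc : ∀ y, 0 ≤ c y) (hk : ∀ y, 0 ≤ k y) (hq : ∀ y, 0 < q2 y)
    (hw : ∀ y, 0 ≤ w y) (hr : ∀ y, 0 < r y) (he : 0 < e) (hwsum : 0 < ∑ y, w y)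
    (H : HasDerivAt (fun u => K
        + (∑ y, (c y + k y * u) * Real.logb 2 ((c y + k y * u) / q2 y))
        + e * (∑ y, (w y * u) * Real.logb 2 (w y * u / r y)) + d * u) 0 0) : False := by
  classical
  have hL2 : (0:ℝ) < Real.log 2 := Real.log_pos one_lt_two
  set CA : ℝ := (∑ y, if c y = 0 then k y / Real.log 2 else 0)
      + e * (∑ y, w y / Real.log 2) with hCA
  set G : ℝ → ℝ := fun u => K
      + (∑ y, if c y = 0 then (k y * (Real.log (k y) - Real.log (q2 y)) / Real.log 2) * u
          else (c y + k y * u) * Real.logb 2 ((c y + k y * u) / q2 y))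
      + e * (∑ y, (w y * (Real.log (w y) - Real.log (r y)) / Real.log 2) * u)
      + d * u with hG
  have hfn : (fun u => K
        + (∑ y, (c y + k y * u) * Real.logb 2 ((c y + k y * u) / q2 y))
        + e * (∑ y, (w y * u) * Real.logb 2 (w y * u / r y)) + d * u)
      = fun u => CA * (u * Real.log u) + G u := by
    funext u
    have h1 : ∀ y, (c y + k y * u) * Real.logb 2 ((c y + k y * u) / q2 y)
        = (if c y = 0 then k y / Real.log 2 else 0) * (u * Real.log u)
          + (if c y = 0 then (k y * (Real.log (k y) - Real.log (q2 y)) / Real.log 2) * u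
              else (c y + k y * u) * Real.logb 2 ((c y + k y * u) / q2 y)) := by
      intro y
      split_ifs with h0
      · rw [h0, zero_add]
        rw [statMulLogLin (k y) (q2 y) u (hq y)]
      · ring
    have h2 : ∀ y, (w y * u) * Real.logb 2 (w y * u / r y)
        = (w y / Real.log 2) * (u * Real.log u)
          + (w y * (Real.log (w y) - Real.log (r y)) / Real.log 2) * u :=
      fun y => statMulLogLin (w y) (r y) u (hr y)
    rw [show (∑ y, (c y + k y * u) * Real.logb 2 ((c y + k y * u) / q2 y))
        = ∑ y, ((if c y = 0 then k y / Real.log 2 else 0) * (u * Real.log u)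
          + (if c y = 0 then (k y * (Real.log (k y) - Real.log (q2 y)) / Real.log 2) * u
              else (c y + k y * u) * Real.logb 2 ((c y + k y * u) / q2 y)))
      from Finset.sum_congr rfl fun y _ => h1 y]
    rw [show (∑ y, (w y * u) * Real.logb 2 (w y * u / r y))
        = ∑ y, ((w y / Real.log 2) * (u * Real.log u)
          + (w y * (Real.log (w y) - Real.log (r y)) / Real.log 2) * u)
      from Finset.sum_congr rfl fun y _ => h2 y]
    rw [Finset.sum_add_distrib, Finset.sum_add_distrib, ← Finset.sum_mul, ← Finset.sum_mul]
    simp only [hG, hCA]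
    ring
  rw [hfn] at H
  -- G is differentiable at 0
  have hGd : ∃ g0 : ℝ, HasDerivAt G g0 0 := by
    have hsum : ∀ y, HasDerivAt (fun u : ℝ => if c y = 0
        then (k y * (Real.log (k y) - Real.log (q2 y)) / Real.log 2) * u
        else (c y + k y * u) * Real.logb 2 ((c y + k y * u) / q2 y))
        (if c y = 0 then (k y * (Real.log (k y) - Real.log (q2 y)) / Real.log 2)
          else k y * (Real.logb 2 ((c y + k y * 0) / q2 y) + 1 / Real.log 2)) 0 := by
      intro y
      by_cases h0 : c y = 0
      · simp only [if_pos h0]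
        simpa using (hasDerivAt_id (0:ℝ)).const_mul
          (k y * (Real.log (k y) - Real.log (q2 y)) / Real.log 2)
      · simp only [if_neg h0]
        refine statAuxDeriv (c y) (k y) (q2 y) 0 (hq y) (Or.inl ?_)
        have : 0 < c y := lt_of_le_of_ne (hc y) (Ne.symm h0)
        simpa using this
    have Hder := (((hasDerivAt_const (0:ℝ) K).add
        (HasDerivAt.fun_sum fun y (_ : y ∈ Finset.univ) => hsum y)).add
      ((HasDerivAt.fun_sum (fun y (_ : y ∈ Finset.univ) => (hasDerivAt_id (0:ℝ)).const_mul
        (w y * (Real.log (w y) - Real.log (r y)) / Real.log 2))).const_mul e)).add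
      ((hasDerivAt_id (0:ℝ)).const_mul d)
    exact ⟨_, Hder⟩
  obtain ⟨g0, hGder⟩ := hGd
  have hCApos : 0 < CA := by
    have h1 : 0 ≤ ∑ y, if c y = 0 then k y / Real.log 2 else 0 := by
      refine Finset.sum_nonneg fun y _ => ?_
      split_ifs
      · exact div_nonneg (hk y) hL2.le
      · exact le_refl 0
    have h2 : 0 < ∑ y, w y / Real.log 2 := by
      rw [← Finset.sum_div]
      exact div_pos hwsum hL2
    rw [hCA]
    nlinarith
  have hbad : HasDerivAt (fun u : ℝ => CA * (u * Real.log u)) (0 - g0) 0 := by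
    have := H.sub hGder
    simpa [Pi.sub_def] using this
  have hbad2 : DifferentiableAt ℝ (fun u : ℝ => u * Real.log u) 0 := by
    have h3 := hbad.const_mul (1 / CA)
    have h4 : (fun u : ℝ => (1 / CA) * (CA * (u * Real.log u)))
        = fun u : ℝ => u * Real.log u := by
      funext u
      field_simp
    rw [h4] at h3
    exact h3.differentiableAt
  exact statNotDiffMulLog hbad2

end MoreAux
/-- Any stationary point `P_{T|X}` of the Lagrangian
`L(P_{T|X}, {λ_x}) = F(P_{T|X}, Q_{T,Y}, Q_A) + Σ_x λ_x (Σ_t P_{T|X}(t|x) − 1)` (for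
fixed strictly positive `Q_A, Q_{T,Y}`) satisfies the closed-form expression for
`P_{T|X}(t|x)` in terms of `μ_x` (an affine function of `λ_x`) and `α_{t,x}`;
consequently `P_{T|X}(t|x) = (α_{t,x}/α_{a(t),x}) P_{A|X}(a(t)|x)`, so the stationary
point is determined by the values `P_{A|X}(a|x)`, which satisfy the stated nonlinear
system. -/
theorem stationary_points_of_lagrangian
    {X Y A Xh : Type} [Fintype X] [Fintype Y] [Fintype A] [Fintype Xh]
    [DecidableEq X] [DecidableEq Y] [DecidableEq A] [DecidableEq Xh]
    [Nonempty X] [Nonempty Y] [Nonempty A] [Nonempty Xh]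
    (PX : X → ℝ) (PW : A → X → Y → ℝ) (dist : X → Xh → ℝ) (cost : A → ℝ)
    (hPX : IsPMF PX) (hPXpos : ∀ x, 0 < PX x)
    (hPW : ∀ a x, IsPMF (PW a x))
    (hdist : ∀ x xh, 0 ≤ dist x xh) (hdist0 : ∀ x, ∃ xh, dist x xh = 0)
    (hcost : ∀ a, 0 ≤ cost a) (hcost0 : ∃ a, cost a = 0)
    (s m : ℝ) (hs : s ≤ 0) (hm : m ≤ 0)
    (QTY : Strat Y Xh A × Y → ℝ) (hQTY : IsPMF QTY) (hQTYpos : ∀ p, 0 < QTY p)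
    (QA : A → ℝ) (hQA : IsPMF QA) (hQApos : ∀ a, 0 < QA a)
    (lam : X → ℝ)
    (PT : X → Strat Y Xh A → ℝ) (hPT : IsCondPMF PT)
    -- stationarity: every partial derivative of the Lagrangian vanishes at `PT`
    (hstat : ∀ (x : X) (t : Strat Y Xh A),
      HasDerivAt (fun u : ℝ => Lagr PX PW dist cost s m QTY QA lam
        (fun x' t' => if x' = x ∧ t' = t then u else PT x' t')) 0 (PT x t)) :
    ∃ μ : X → ℝ,
      (∀ x, ∃ c₀ c₁ : ℝ, μ x = c₀ + c₁ * lam x) ∧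
      (∀ (x : X) (t : Strat Y Xh A),
        PT x t = (2 : ℝ) ^ (μ x) * alphaT PW dist cost s m QTY QA t x /
          ∏ y, (∑ xt, PX xt * pAgivenX PT t.2 xt * PW t.2 xt y) ^ (PW t.2 x y)) ∧
      (∀ (x : X) (t : Strat Y Xh A),
        PT x t = (alphaT PW dist cost s m QTY QA t x /
            alphaA PW dist cost s m QTY QA t.2 x) * pAgivenX PT t.2 x) ∧
      (∀ (x : X) (a : A),
        pAgivenX PT a x = (2 : ℝ) ^ (μ x) * alphaA PW dist cost s m QTY QA a x /
          ∏ y, (∑ xt, PX xt * PW a xt y * pAgivenX PT a xt) ^ (PW a x y)) := by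
  classical
  have hPTnn : ∀ x' t', 0 ≤ PT x' t' := fun x' => (hPT x').1
  have hPWnn : ∀ a x' y, 0 ≤ PW a x' y := fun a x' => (hPW a x').1
  have hPWsum : ∀ a x', (∑ y, PW a x' y) = 1 := fun a x' => (hPW a x').2
  have hPXnn : ∀ x', 0 ≤ PX x' := fun x' => (hPXpos x').le
  have hL2 : (0:ℝ) < Real.log 2 := Real.log_pos one_lt_two
  -- Step 1 : positivity of all entries of PT
  have hpos : ∀ (x : X) (t : Strat Y Xh A), 0 < PT x t := by
    intro x t
    rcases (hPTnn x t).lt_or_eq with h | h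
    · exact h
    exfalso
    obtain ⟨K, hK⟩ := masterRepr PX PW PT x t dist cost s m QTY QA lam
    have hE := hstat x t
    rw [funext hK] at hE
    rw [← h] at hE
    simp only [mul_zero, sub_zero] at hE
    have hE2 : HasDerivAt (fun u : ℝ => K
        + (∑ y, (pYA PX PW PT y t.2 + PX x * PW t.2 x y * u)
            * Real.logb 2 ((pYA PX PW PT y t.2 + PX x * PW t.2 x y * u) / QA t.2))
        + PX x * (∑ y, (PW t.2 x y * u) * Real.logb 2 (PW t.2 x y * u / QTY (t, y)))
        + (-(∑ y, PX x * PW t.2 x y * Real.logb 2 (PW t.2 x y))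
            - s * (∑ y, PX x * PW t.2 x y * dist x (t.1 y))
            - m * (PX x * cost t.2) + lam x) * u) 0 0 := by
      have hfe : (fun u : ℝ => K
          + (∑ y, (pYA PX PW PT y t.2 + PX x * PW t.2 x y * u)
              * Real.logb 2 ((pYA PX PW PT y t.2 + PX x * PW t.2 x y * u) / QA t.2))
          + PX x * (∑ y, (PW t.2 x y * u) * Real.logb 2 (PW t.2 x y * u / QTY (t, y)))
          + (-(∑ y, PX x * PW t.2 x y * Real.logb 2 (PW t.2 x y))
              - s * (∑ y, PX x * PW t.2 x y * dist x (t.1 y))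
              - m * (PX x * cost t.2) + lam x) * u)
        = (fun u : ℝ => K
          + (∑ y, (pYA PX PW PT y t.2 + PX x * PW t.2 x y * u)
              * Real.logb 2 ((pYA PX PW PT y t.2 + PX x * PW t.2 x y * u) / QA t.2))
          - u * (∑ y, PX x * PW t.2 x y * Real.logb 2 (PW t.2 x y))
          + PX x * (∑ y, (PW t.2 x y * u) * Real.logb 2 (PW t.2 x y * u / QTY (t, y)))
          - s * (u * (∑ y, PX x * PW t.2 x y * dist x (t.1 y)))
          - m * (u * (PX x * cost t.2))
          + lam x * u) := by
        funext u; ring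
      rw [hfe]
      exact hE
    refine bad_case (fun y => pYA PX PW PT y t.2) (fun y => PX x * PW t.2 x y)
      (fun _ => QA t.2) (fun y => PW t.2 x y) (fun y => QTY (t, y)) (PX x) _ K
      (fun y => pYA_nonneg PX PW PT hPXnn hPWnn hPTnn y t.2)
      (fun y => mul_nonneg (hPXnn x) (hPWnn t.2 x y))
      (fun _ => hQApos t.2) (fun y => hPWnn t.2 x y) (fun y => hQTYpos (t, y))
      (hPXpos x) ?_ hE2
    rw [hPWsum t.2 x]
    norm_num
  -- positivity of pYA at relevant points
  have hPYpos : ∀ (x : X) (t : Strat Y Xh A) (y : Y), PW t.2 x y ≠ 0 →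
      0 < pYA PX PW PT y t.2 := by
    intro x t y hy
    have h1 : 0 < pXYT PX PW PT x y t := by
      unfold pXYT
      have h2 := hpos x t
      have h3 := hPXpos x
      have h4 : 0 < PW t.2 x y := lt_of_le_of_ne (hPWnn t.2 x y) (Ne.symm hy)
      positivity
    exact lt_of_lt_of_le h1 (pYA_lower PX PW PT hPXnn hPWnn hPTnn x y t)
  -- Step 2 : key logarithmic identity
  have hkey : ∀ (x : X) (t : Strat Y Xh A), Real.logb 2 (PT x t)
      = (-2 / Real.log 2 - lam x / PX x) + Real.logb 2 (QA t.2) + m * cost t.2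
        + (∑ y, PW t.2 x y * (s * dist x (t.1 y) + Real.logb 2 (QTY (t, y))))
        - (∑ y, PW t.2 x y * Real.logb 2 (pYA PX PW PT y t.2)) := by
    intro x t
    obtain ⟨K, hK⟩ := masterRepr PX PW PT x t dist cost s m QTY QA lam
    have hE := hstat x t
    rw [funext hK] at hE
    have h1 : HasDerivAt (fun u : ℝ => ∑ y,
        (pYA PX PW PT y t.2 - PX x * PW t.2 x y * PT x t + PX x * PW t.2 x y * u)
          * Real.logb 2 ((pYA PX PW PT y t.2 - PX x * PW t.2 x y * PT x t
              + PX x * PW t.2 x y * u) / QA t.2))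
        (∑ y, PX x * PW t.2 x y
          * (Real.logb 2 (pYA PX PW PT y t.2 / QA t.2) + 1 / Real.log 2)) (PT x t) := by
      refine HasDerivAt.fun_sum fun y _ => ?_
      have hcase : 0 < (pYA PX PW PT y t.2 - PX x * PW t.2 x y * PT x t)
          + PX x * PW t.2 x y * PT x t ∨ PX x * PW t.2 x y = 0 := by
        rcases eq_or_ne (PW t.2 x y) 0 with h0 | h0
        · right; rw [h0, mul_zero]
        · left
          rw [sub_add_cancel]
          exact hPYpos x t y h0
      have hd := statAuxDeriv (pYA PX PW PT y t.2 - PX x * PW t.2 x y * PT x t)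
        (PX x * PW t.2 x y) (QA t.2) (PT x t) (hQApos t.2) hcase
      simpa only [sub_add_cancel] using hd
    have h3 : HasDerivAt (fun u : ℝ => ∑ y,
        (PW t.2 x y * u) * Real.logb 2 (PW t.2 x y * u / QTY (t, y)))
        (∑ y, PW t.2 x y * (Real.logb 2 (PW t.2 x y * PT x t / QTY (t, y))
          + 1 / Real.log 2)) (PT x t) := by
      refine HasDerivAt.fun_sum fun y _ => ?_
      have hcase : 0 < 0 + PW t.2 x y * PT x t ∨ PW t.2 x y = 0 := by
        rcases eq_or_ne (PW t.2 x y) 0 with h0 | h0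
        · right; exact h0
        · left
          rw [zero_add]
          exact mul_pos (lt_of_le_of_ne (hPWnn t.2 x y) (Ne.symm h0)) (hpos x t)
      have hd := statAuxDeriv 0 (PW t.2 x y) (QTY (t, y)) (PT x t) (hQTYpos (t, y)) hcase
      simpa only [zero_add] using hd
    have Hfull := ((((((hasDerivAt_const (PT x t) K).add h1).sub
        ((hasDerivAt_id (PT x t)).mul_const
          (∑ y, PX x * PW t.2 x y * Real.logb 2 (PW t.2 x y)))).add
        (h3.const_mul (PX x))).sub
        (((hasDerivAt_id (PT x t)).mul_const
          (∑ y, PX x * PW t.2 x y * dist x (t.1 y))).const_mul s)).sub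
        (((hasDerivAt_id (PT x t)).mul_const (PX x * cost t.2)).const_mul m)).add
        ((hasDerivAt_id (PT x t)).const_mul (lam x))
    have heqD := Hfull.unique hE
    -- sum expansions
    have hA : (∑ y, PX x * PW t.2 x y
        * (Real.logb 2 (pYA PX PW PT y t.2 / QA t.2) + 1 / Real.log 2))
        = PX x * ((∑ y, PW t.2 x y * Real.logb 2 (pYA PX PW PT y t.2))
            - Real.logb 2 (QA t.2) + 1 / Real.log 2) := by
      have hy : ∀ y, PX x * PW t.2 x y
          * (Real.logb 2 (pYA PX PW PT y t.2 / QA t.2) + 1 / Real.log 2)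
          = PX x * (PW t.2 x y * Real.logb 2 (pYA PX PW PT y t.2))
            - (PX x * Real.logb 2 (QA t.2)) * PW t.2 x y
            + (PX x * (1 / Real.log 2)) * PW t.2 x y := by
        intro y
        rcases eq_or_ne (PW t.2 x y) 0 with h0 | h0
        · rw [h0]; ring
        · rw [Real.logb_div (hPYpos x t y h0).ne' (hQApos t.2).ne']
          ring
      rw [Finset.sum_congr rfl fun y _ => hy y, Finset.sum_add_distrib,
        Finset.sum_sub_distrib, ← Finset.mul_sum, ← Finset.mul_sum, ← Finset.mul_sum,
        hPWsum t.2 x]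
      ring
    have hB : (∑ y, PW t.2 x y * (Real.logb 2 (PW t.2 x y * PT x t / QTY (t, y))
        + 1 / Real.log 2))
        = (∑ y, PW t.2 x y * Real.logb 2 (PW t.2 x y)) + Real.logb 2 (PT x t)
          - (∑ y, PW t.2 x y * Real.logb 2 (QTY (t, y))) + 1 / Real.log 2 := by
      have hy : ∀ y, PW t.2 x y * (Real.logb 2 (PW t.2 x y * PT x t / QTY (t, y))
          + 1 / Real.log 2)
          = PW t.2 x y * Real.logb 2 (PW t.2 x y) + Real.logb 2 (PT x t) * PW t.2 x y
            - PW t.2 x y * Real.logb 2 (QTY (t, y)) + (1 / Real.log 2) * PW t.2 x y := by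
        intro y
        rcases eq_or_ne (PW t.2 x y) 0 with h0 | h0
        · rw [h0]; ring
        · rw [Real.logb_div (mul_ne_zero h0 (hpos x t).ne') (hQTYpos (t, y)).ne',
            Real.logb_mul h0 (hpos x t).ne']
          ring
      rw [Finset.sum_congr rfl fun y _ => hy y, Finset.sum_add_distrib,
        Finset.sum_sub_distrib, Finset.sum_add_distrib, ← Finset.mul_sum,
        ← Finset.mul_sum, hPWsum t.2 x]
      ring
    have hC : (∑ y, PX x * PW t.2 x y * Real.logb 2 (PW t.2 x y))
        = PX x * (∑ y, PW t.2 x y * Real.logb 2 (PW t.2 x y)) := by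
      rw [Finset.mul_sum]
      exact Finset.sum_congr rfl fun y _ => by ring
    have hD : (∑ y, PX x * PW t.2 x y * dist x (t.1 y))
        = PX x * (∑ y, PW t.2 x y * dist x (t.1 y)) := by
      rw [Finset.mul_sum]
      exact Finset.sum_congr rfl fun y _ => by ring
    have hS2 : (∑ y, PW t.2 x y * (s * dist x (t.1 y) + Real.logb 2 (QTY (t, y))))
        = s * (∑ y, PW t.2 x y * dist x (t.1 y))
          + (∑ y, PW t.2 x y * Real.logb 2 (QTY (t, y))) := by
      rw [Finset.sum_congr rfl fun y (_ : y ∈ Finset.univ) =>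
        (by ring : PW t.2 x y * (s * dist x (t.1 y) + Real.logb 2 (QTY (t, y)))
          = s * (PW t.2 x y * dist x (t.1 y)) + PW t.2 x y * Real.logb 2 (QTY (t, y)))]
      rw [Finset.sum_add_distrib, ← Finset.mul_sum]
    rw [hA, hB, hC, hD] at heqD
    have hmain : PX x * Real.logb 2 (PT x t)
        = PX x * (Real.logb 2 (QA t.2) + m * cost t.2
            + (s * (∑ y, PW t.2 x y * dist x (t.1 y))
              + (∑ y, PW t.2 x y * Real.logb 2 (QTY (t, y))))
            - (∑ y, PW t.2 x y * Real.logb 2 (pYA PX PW PT y t.2)))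
          - 2 * (PX x / Real.log 2) - lam x := by
      linear_combination heqD
    rw [hS2]
    refine mul_left_cancel₀ (hPXpos x).ne' ?_
    rw [hmain]
    field_simp [(hPXpos x).ne', hL2.ne']
    ring
  -- Step 3 : conclusion 2
  have h2c : ∀ (x : X) (t : Strat Y Xh A), PT x t
      = (2:ℝ) ^ (-2 / Real.log 2 - lam x / PX x) * alphaT PW dist cost s m QTY QA t x
        / ∏ y, (∑ xt, PX xt * pAgivenX PT t.2 xt * PW t.2 xt y) ^ (PW t.2 x y) := by
    intro x t
    have hprod : (2:ℝ) ^ (∑ y, PW t.2 x y * Real.logb 2 (pYA PX PW PT y t.2))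
        = ∏ y, (pYA PX PW PT y t.2) ^ (PW t.2 x y) :=
      rpow_sum_eq_prod _ _ (fun y hy => hPYpos x t y hy)
    have hbase : (∏ y, (∑ xt, PX xt * pAgivenX PT t.2 xt * PW t.2 xt y) ^ (PW t.2 x y))
        = ∏ y, (pYA PX PW PT y t.2) ^ (PW t.2 x y) :=
      Finset.prod_congr rfl fun y _ => by rw [← pYA_eq]
    rw [hbase, ← hprod]
    have hlog := hkey x t
    rw [show PT x t = (2:ℝ) ^ (Real.logb 2 (PT x t)) from
      (Real.rpow_logb (by norm_num) (by norm_num) (hpos x t)).symm]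
    rw [hlog]
    rw [Real.rpow_sub (by norm_num : (0:ℝ) < 2),
      Real.rpow_add (by norm_num : (0:ℝ) < 2),
      Real.rpow_add (by norm_num : (0:ℝ) < 2),
      Real.rpow_add (by norm_num : (0:ℝ) < 2)]
    rw [Real.rpow_logb (by norm_num) (by norm_num) (hQApos t.2)]
    unfold alphaT
    ring
  -- Step 4 : conclusion 4
  have h4c : ∀ (x : X) (a : A), pAgivenX PT a x
      = (2:ℝ) ^ (-2 / Real.log 2 - lam x / PX x) * alphaA PW dist cost s m QTY QA a x
        / ∏ y, (∑ xt, PX xt * PW a xt y * pAgivenX PT a xt) ^ (PW a x y) := by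
    intro x a
    have hbase2 : (∏ y, (∑ xt, PX xt * PW a xt y * pAgivenX PT a xt) ^ (PW a x y))
        = ∏ y, (∑ xt, PX xt * pAgivenX PT a xt * PW a xt y) ^ (PW a x y) :=
      Finset.prod_congr rfl fun y _ => by
        rw [show (∑ xt, PX xt * PW a xt y * pAgivenX PT a xt)
          = ∑ xt, PX xt * pAgivenX PT a xt * PW a xt y from
          Finset.sum_congr rfl fun xt _ => by ring]
    rw [hbase2]
    rw [show pAgivenX PT a x = ∑ t', if t'.2 = a then PT x t' else 0 from rfl]
    rw [show alphaA PW dist cost s m QTY QA a x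
      = ∑ t', if t'.2 = a then alphaT PW dist cost s m QTY QA t' x else 0 from rfl]
    rw [show (∑ t', if t'.2 = a then PT x t' else 0)
        = ∑ t', (if t'.2 = a then alphaT PW dist cost s m QTY QA t' x else 0)
          * ((2:ℝ) ^ (-2 / Real.log 2 - lam x / PX x)
            / ∏ y, (∑ xt, PX xt * pAgivenX PT a xt * PW a xt y) ^ (PW a x y)) from
      Finset.sum_congr rfl fun t' _ => ?_]
    · rw [← Finset.sum_mul]
      ring
    · split_ifs with hcnd
      · rw [h2c x t', hcnd]
        ring
      · rw [zero_mul]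
  -- Step 5 : conclusion 3
  have h3c : ∀ (x : X) (t : Strat Y Xh A), PT x t
      = (alphaT PW dist cost s m QTY QA t x / alphaA PW dist cost s m QTY QA t.2 x)
        * pAgivenX PT t.2 x := by
    intro x t
    have hαA := alphaA_pos PW dist cost s m QTY QA hQApos t x
    rw [h4c x t.2, h2c x t]
    rw [show (∏ y, (∑ xt, PX xt * PW t.2 xt y * pAgivenX PT t.2 xt) ^ (PW t.2 x y))
        = ∏ y, (∑ xt, PX xt * pAgivenX PT t.2 xt * PW t.2 xt y) ^ (PW t.2 x y) from
      Finset.prod_congr rfl fun y _ => by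
        rw [show (∑ xt, PX xt * PW t.2 xt y * pAgivenX PT t.2 xt)
          = ∑ xt, PX xt * pAgivenX PT t.2 xt * PW t.2 xt y from
          Finset.sum_congr rfl fun xt _ => by ring]]
    exact (myDivHelper _ _ _ _ hαA.ne').symm
  exact ⟨fun x => -2 / Real.log 2 - lam x / PX x,
    fun x => ⟨-2 / Real.log 2, -(1 / PX x), by ring⟩, h2c, h3c, h4c⟩
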